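/- arXiv:math/0309366 — 2 statements merged into one kernel-verified Lean document; each statement's English description precedes it below -/
import Mathlib

section
/- For every integer k ≥ 1, define ℓ^{(k)}(n) := (1/k)·ℓ(k·n) for n ≠ 0 and ℓ^{(k)}(0) := (1/k)·ℓ(0) + ((k² − 1)/(24k))·c. Then the family ℓ^{(k)} together with the central element k·c again satisfies the Virasoro relations: ⁅ℓ^{(k)}(m), ℓ^{(k)}(n)⁆ = (m − n)·ℓ^{(k)}(m + n) + ((m³ − m)/12)·δ_{m,−n}·(k·c) for all integers m, n, and ⁅ℓ^{(k)}(n), k·c⁆ = 0. (Thus composing a Virasoro representation of central charge c with the rescaling L_n ↦ (1/k)L_{kn} yields a Virasoro representation of central charge k·c.) -/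
/-- If `ℓ : ℤ → L` together with a central element `c` satisfies the Virasoro relations
with central charge `c`, then for every integer `k ≥ 1` the rescaled family
`ℓ⁽ᵏ⁾ n = (1/k) • ℓ (k n)` for `n ≠ 0`, `ℓ⁽ᵏ⁾ 0 = (1/k) • ℓ 0 + ((k² - 1)/(24 k)) • c`,
together with the central element `k • c`, again satisfies the Virasoro relations;
i.e. the rescaling `L_n ↦ (1/k) L_{kn}` turns central charge `c` into `k • c`. -/
theorem virasoro_rescaling (L : Type*) [LieRing L] [LieAlgebra ℂ L] (ℓ : ℤ → L) (c : L)
    (hc : ∀ n : ℤ, ⁅ℓ n, c⁆ = 0)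
    (hVir : ∀ m n : ℤ, ⁅ℓ m, ℓ n⁆ =
      ((m - n : ℤ) : ℂ) • ℓ (m + n) +
        (if m + n = 0 then ((m : ℂ) ^ 3 - (m : ℂ)) / 12 else 0) • c)
    (k : ℤ) (hk : 1 ≤ k)
    (ℓk : ℤ → L)
    (hℓk0 : ℓk 0 = (k : ℂ)⁻¹ • ℓ 0 + (((k : ℂ) ^ 2 - 1) / (24 * (k : ℂ))) • c)
    (hℓk : ∀ n : ℤ, n ≠ 0 → ℓk n = (k : ℂ)⁻¹ • ℓ (k * n)) :
    (∀ m n : ℤ, ⁅ℓk m, ℓk n⁆ =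
      ((m - n : ℤ) : ℂ) • ℓk (m + n) +
        (if m + n = 0 then ((m : ℂ) ^ 3 - (m : ℂ)) / 12 else 0) • ((k : ℂ) • c)) ∧
    (∀ n : ℤ, ⁅ℓk n, (k : ℂ) • c⁆ = 0) := by
  have hkZ : k ≠ 0 := by omega
  have hk0 : (k : ℂ) ≠ 0 := Int.cast_ne_zero.mpr hkZ
  have hc' : ∀ n : ℤ, ⁅c, ℓ n⁆ = 0 := fun n => by
    rw [← lie_skew, hc, neg_zero]
  constructor
  · intro m n
    rcases eq_or_ne m 0 with hm | hm
    · subst hm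
      rcases eq_or_ne n 0 with hn | hn
      · subst hn
        simp
      · have hkn : k * n ≠ 0 := mul_ne_zero hkZ hn
        rw [hℓk0, hℓk n hn, add_lie, smul_lie, lie_smul, smul_lie, lie_smul, hVir, hc']
        simp only [zero_add]
        rw [if_neg hn, if_neg hkn, hℓk n hn]
        push_cast
        match_scalars <;> field_simp <;> ring
    · rcases eq_or_ne n 0 with hn | hn
      · subst hn
        have hkm : k * m ≠ 0 := mul_ne_zero hkZ hm
        rw [hℓk0, hℓk m hm, lie_add, lie_smul, smul_lie, lie_smul, smul_lie, hVir, hc]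
        simp only [add_zero]
        rw [if_neg hm, if_neg hkm, hℓk m hm]
        push_cast
        match_scalars <;> field_simp <;> ring
      · rcases eq_or_ne (m + n) 0 with hmn | hmn
        · rw [hℓk m hm, hℓk n hn, smul_lie, lie_smul, hVir]
          have h1 : k * m + k * n = 0 := by rw [← mul_add, hmn, mul_zero]
          rw [if_pos h1, if_pos hmn, h1, hmn, hℓk0]
          have hn' : n = -m := by omega
          subst hn'
          push_cast
          match_scalars <;> field_simp <;> ring
        · rw [hℓk m hm, hℓk n hn, smul_lie, lie_smul, hVir]
          have h1 : k * m + k * n ≠ 0 := by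
            rw [← mul_add]; exact mul_ne_zero hkZ hmn
          rw [if_neg h1, if_neg hmn, ← mul_add, hℓk (m + n) hmn]
          push_cast
          match_scalars <;> field_simp <;> ring
  · intro n
    rcases eq_or_ne n 0 with hn | hn
    · subst hn
      rw [hℓk0]
      simp [lie_smul, smul_lie, hc]
    · rw [hℓk n hn]
      simp [lie_smul, smul_lie, hc]
end

section
/- Let α, β ∈ ℂ with |α|² − |β|² = 1 and let n ≥ 1 be an integer. Then there exists a continuous map h : S¹ → S¹ defined on the whole circle such that h(z)ⁿ = (α·zⁿ + β)/(β̄·zⁿ + ᾱ) for all z ∈ S¹. (This is the existence of the lift M_g^{(n)} satisfying M_g^{(n)}(z)ⁿ = M_{ḡ}(zⁿ), the geometric core of the embedding of the n-cover of the Möbius group into Diff(S¹).) -/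
/-- Let `((α, β), (conj β, conj α))` be an `SU(1,1)` matrix, acting on the circle by
`g(w) = (α w + β)/(conj β w + conj α)`, and let `n ≥ 1`. Then there is a continuous map
`h : S¹ → S¹`, defined on the whole circle, with `h(z)ⁿ = g(zⁿ)` for all `z ∈ S¹`:
this is the lift `M_g⁽ⁿ⁾` with `M_g⁽ⁿ⁾(z)ⁿ = M_g(zⁿ)`, the geometric core of the
embedding of the `n`-cover of the Möbius group into `Diff(S¹)`. -/
theorem exists_nth_cover_lift_of_moebius (α β : ℂ)
    (h : ‖α‖ ^ 2 - ‖β‖ ^ 2 = 1) (n : ℕ) (hn : 1 ≤ n) :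
    ∃ f : {z : ℂ // ‖z‖ = 1} → ℂ,
      Continuous f ∧ (∀ z, ‖f z‖ = 1) ∧
      ∀ z : {z : ℂ // ‖z‖ = 1},
        (f z) ^ n =
          (α * (z : ℂ) ^ n + β) / ((starRingEnd ℂ) β * (z : ℂ) ^ n + (starRingEnd ℂ) α) := by
  have hα : α ≠ 0 := by
    intro h0
    rw [h0] at h
    simp at h
    nlinarith [norm_nonneg β, sq_nonneg ‖β‖]
  have hβα : ‖β‖ < ‖α‖ := by
    nlinarith [norm_nonneg β, norm_nonneg α]
  have hαc : (starRingEnd ℂ) α ≠ 0 := by simpa using hα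
  have hn' : (n : ℂ) ≠ 0 := Nat.cast_ne_zero.2 (by omega)
  set q : ℂ := β / α with hq
  have hqabs : ‖q‖ < 1 := by
    rw [hq, norm_div, div_lt_one (norm_pos_iff.2 hα)]
    exact hβα
  set v : ℂ → ℂ := fun z => 1 + q * (starRingEnd ℂ) z ^ n with hv
  have hre : ∀ z : ℂ, ‖z‖ = 1 → 0 < (v z).re := by
    intro z hz
    have habs : ‖q * (starRingEnd ℂ) z ^ n‖ < 1 := by
      rw [norm_mul, norm_pow, Complex.norm_conj, hz, one_pow, mul_one]
      exact hqabs
    have h2 := abs_le.1 (Complex.abs_re_le_norm (q * (starRingEnd ℂ) z ^ n))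
    simp only [hv, Complex.add_re, Complex.one_re]
    linarith [h2.1]
  have hvc : Continuous v := by
    rw [hv]
    exact continuous_const.add (continuous_const.mul (Complex.continuous_conj.pow n))
  set c : ℂ := Complex.exp (Complex.log (α / (starRingEnd ℂ) α) / n) with hcdef
  have hcn : c ^ n = α / (starRingEnd ℂ) α := by
    rw [hcdef, ← Complex.exp_nat_mul, mul_div_cancel₀ _ hn', Complex.exp_log (div_ne_zero hα hαc)]
  have hcabs : ‖c‖ = 1 := by
    have h1 : ‖c‖ ^ n = 1 := by
      rw [← norm_pow, hcn, norm_div, Complex.norm_conj, div_self (norm_ne_zero_iff.2 hα)]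
    rcases pow_eq_one_iff_cases.mp h1 with h2 | h2 | h2
    · omega
    · exact h2
    · nlinarith [norm_nonneg c]
  refine ⟨fun z => (z : ℂ) * c * Complex.exp ((2 * (v z).arg / n : ℝ) * Complex.I), ?_, ?_, ?_⟩
  · apply Continuous.mul
    · exact continuous_subtype_val.mul continuous_const
    · apply Complex.continuous_exp.comp
      apply Continuous.mul _ continuous_const
      apply Complex.continuous_ofReal.comp
      apply Continuous.div_const
      apply Continuous.mul continuous_const
      rw [continuous_iff_continuousAt]
      intro z
      have harg : ContinuousAt Complex.arg (v (z : ℂ)) :=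
        Complex.continuousAt_arg (Complex.mem_slitPlane_iff.2 (Or.inl (hre z z.2)))
      show ContinuousAt ((Complex.arg ∘ v) ∘ (Subtype.val)) z
      exact (harg.comp hvc.continuousAt).comp continuous_subtype_val.continuousAt
  · intro z
    rw [norm_mul, norm_mul, z.2, hcabs, Complex.norm_exp]
    simp
  · intro z
    obtain ⟨z, hz⟩ := z
    simp only []
    have hz0 : z ≠ 0 := by intro h0; rw [h0] at hz; simp at hz
    have hvz : v z ≠ 0 := by
      intro h0
      have := hre z hz
      rw [h0] at this; simp at this
    have hvzc : (starRingEnd ℂ) (v z) ≠ 0 := by simpa using hvz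
    have hden : (starRingEnd ℂ) β * z ^ n + (starRingEnd ℂ) α ≠ 0 := by
      intro h0
      have h1 : (starRingEnd ℂ) α = -((starRingEnd ℂ) β * z ^ n) := by linear_combination h0
      have h2 := congrArg norm h1
      rw [norm_neg, norm_mul, norm_pow, Complex.norm_conj, Complex.norm_conj, hz, one_pow,
        mul_one] at h2
      exact (ne_of_gt hβα) h2
    have hexp : Complex.exp ((2 * (v z).arg : ℝ) * Complex.I) = v z / (starRingEnd ℂ) (v z) := by
      have h1 := Complex.norm_mul_exp_arg_mul_I (v z)
      have hr : (‖v z‖ : ℂ) ≠ 0 := by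
        exact_mod_cast norm_ne_zero_iff.2 hvz
      have h2 : (starRingEnd ℂ) (v z) =
          (‖v z‖ : ℂ) * Complex.exp (-(((v z).arg : ℂ) * Complex.I)) := by
        conv_lhs => rw [← h1]
        rw [map_mul, ← Complex.exp_conj]
        congr 1
        · exact Complex.conj_ofReal _
        · rw [map_mul, Complex.conj_ofReal, Complex.conj_I]
          ring
      have hsq : Complex.exp ((2 * (v z).arg : ℝ) * Complex.I)
          = Complex.exp (((v z).arg : ℂ) * Complex.I) * Complex.exp (((v z).arg : ℂ) * Complex.I) := by
        rw [← Complex.exp_add]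
        congr 1
        push_cast
        ring
      have he := Complex.exp_ne_zero (((v z).arg : ℂ) * Complex.I)
      rw [hsq, h2, Complex.exp_neg]
      rw [eq_div_iff (mul_ne_zero hr (inv_ne_zero he))]
      linear_combination h1 + (‖v z‖ : ℂ) * Complex.exp (((v z).arg : ℂ) * Complex.I) * (mul_inv_cancel₀ he)
    have hpow : (Complex.exp ((2 * (v z).arg / n : ℝ) * Complex.I)) ^ n
        = Complex.exp ((2 * (v z).arg : ℝ) * Complex.I) := by
      rw [← Complex.exp_nat_mul]
      congr 1
      push_cast
      field_simp
    rw [mul_pow, mul_pow, hpow, hexp, hcn]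
    have hzinv : (starRingEnd ℂ) z = z⁻¹ := by
      have h1 : z * (starRingEnd ℂ) z = 1 := by
        rw [Complex.mul_conj, Complex.normSq_eq_norm_sq, hz]
        norm_num
      field_simp [hz0] at h1 ⊢
      linear_combination h1
    have hconjv : (starRingEnd ℂ) (v z) = 1 + (starRingEnd ℂ) β / (starRingEnd ℂ) α * z ^ n := by
      simp only [hv, hq, map_add, map_mul, map_pow, map_one, map_div₀, Complex.conj_conj]
    have hvden : (1 : ℂ) + (starRingEnd ℂ) β / (starRingEnd ℂ) α * z ^ n ≠ 0 :=
      hconjv ▸ hvzc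
    rw [hconjv]
    simp only [hv, hq, hzinv]
    rw [eq_div_iff hden]
    have e1 : (1:ℂ) + (starRingEnd ℂ) β / (starRingEnd ℂ) α * z ^ n
        = ((starRingEnd ℂ) β * z ^ n + (starRingEnd ℂ) α) / (starRingEnd ℂ) α := by
      field_simp
      ring
    have e2 : (1:ℂ) + β / α * z⁻¹ ^ n = (α * z ^ n + β) / (α * z ^ n) := by
      rw [inv_pow]
      field_simp
    rw [e1, e2]
    have hD : (z ^ n * α * (starRingEnd ℂ) α ^ 2
        + z ^ (n * 2) * α * (starRingEnd ℂ) α * (starRingEnd ℂ) β) ≠ 0 := by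
      have e : z ^ n * α * (starRingEnd ℂ) α ^ 2
          + z ^ (n * 2) * α * (starRingEnd ℂ) α * (starRingEnd ℂ) β
          = z ^ n * α * (starRingEnd ℂ) α * ((starRingEnd ℂ) β * z ^ n + (starRingEnd ℂ) α) := by
        ring
      rw [e]
      exact mul_ne_zero (mul_ne_zero (mul_ne_zero (pow_ne_zero _ hz0) hα) hαc) hden
    field_simp
    have hDinv : (z ^ n * α * (starRingEnd ℂ) α ^ 2
        + z ^ (n * 2) * α * (starRingEnd ℂ) α * (starRingEnd ℂ) β) *
        (z ^ n * α * (starRingEnd ℂ) α ^ 2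
        + z ^ (n * 2) * α * (starRingEnd ℂ) α * (starRingEnd ℂ) β)⁻¹ = 1 :=
      mul_inv_cancel₀ hD
    rw [mul_div_assoc, div_self (by rw [mul_comm]; exact hden), mul_one]
end
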